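/- (Quantum harmonic oscillator eigenstates.) Let ω > 0, n ∈ ℕ, and let H : ℝ → ℝ be a twice continuously differentiable function satisfying the Hermite differential equation H''(ξ) − 2ξH'(ξ) + 2nH(ξ) = 0 for all ξ ∈ ℝ. Define ψ : ℝ × ℝ → ℂ by ψ(x,t) := H(√ω·x)·exp(−½(ω x² + (2n+1)·i·ω·t)). Then ψ satisfies i∂_tψ(x,t) + ½∂_x²ψ(x,t) − ½ω²x²·ψ(x,t) = 0 for all (x,t) ∈ ℝ²; that is, ψ solves the one-dimensional Schrödinger equation with harmonic oscillator potential V(x) = ω²x²/2. -/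

import Mathlib

noncomputable section

/-- The quantum harmonic oscillator wave function
`ψ(x,t) = H(√ω·x)·exp(−½(ωx² + (2n+1)·i·ω·t))`, for a function `H` satisfying the
Hermite differential equation. -/
def hoWave (ω : ℝ) (n : ℕ) (H : ℝ → ℝ) (x t : ℝ) : ℂ :=
  ((H (Real.sqrt ω * x) : ℝ) : ℂ) *
    Complex.exp (-(1 / 2) *
      ((ω : ℂ) * (x : ℂ) ^ 2 + (2 * (n : ℂ) + 1) * Complex.I * (ω : ℂ) * (t : ℂ)))

/-- If `ω > 0` and `H ∈ C²(ℝ;ℝ)` satisfies the Hermite differential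
equation `H''(ξ) − 2ξH'(ξ) + 2nH(ξ) = 0`, then `ψ = hoWave ω n H` solves the
one-dimensional Schrödinger equation `i∂_tψ + ½∂_x²ψ − ½ω²x²·ψ = 0` on `ℝ²`. -/
theorem harmonic_oscillator_solution (ω : ℝ) (hω : 0 < ω) (n : ℕ)
    (H : ℝ → ℝ) (hH : ContDiff ℝ 2 H)
    (hODE : ∀ ξ : ℝ, deriv (deriv H) ξ - 2 * ξ * deriv H ξ + 2 * (n : ℝ) * H ξ = 0) :
    ∀ x t : ℝ,
      Complex.I * deriv (fun s => hoWave ω n H x s) t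
        + (1 / 2) * deriv (deriv (fun y => hoWave ω n H y t)) x
        - ((ω ^ 2 * x ^ 2 / 2 : ℝ) : ℂ) * hoWave ω n H x t = 0 := by
  intro x t
  set c := Real.sqrt ω with hc
  have hc2 : (c : ℝ) ^ 2 = ω := Real.sq_sqrt hω.le
  have hc2' : (c : ℂ) ^ 2 = (ω : ℂ) := by exact_mod_cast congrArg (fun r : ℝ => (r : ℂ)) hc2
  have hH1 : Differentiable ℝ H := hH.differentiable (by norm_num)
  have hH2 : Differentiable ℝ (deriv H) := by
    have h2 : ContDiff ℝ (1 + 1) H := by norm_num; exact hH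
    exact (contDiff_succ_iff_deriv.mp h2).2.2.differentiable (by norm_num)
  -- time derivative
  have hT : HasDerivAt (fun s : ℝ => hoWave ω n H x s)
      (hoWave ω n H x t * (-(1 / 2) * ((2 * (n : ℂ) + 1) * Complex.I * (ω : ℂ)))) t := by
    have h0 : HasDerivAt (fun s : ℝ => ((s : ℝ) : ℂ)) 1 t := (hasDerivAt_id t).ofReal_comp
    have h1 : HasDerivAt (fun s : ℝ =>
        (-(1 / 2) : ℂ) * ((ω : ℂ) * (x : ℂ) ^ 2 + (2 * (n : ℂ) + 1) * Complex.I * (ω : ℂ) * (s : ℂ)))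
        (-(1 / 2) * ((2 * (n : ℂ) + 1) * Complex.I * (ω : ℂ))) t := by
      have := (((h0.const_mul ((2 * (n : ℂ) + 1) * Complex.I * (ω : ℂ))).const_add
        ((ω : ℂ) * (x : ℂ) ^ 2)).const_mul (-(1 / 2) : ℂ))
      simpa [mul_comm, mul_assoc, mul_left_comm] using this
    have := (h1.cexp).const_mul ((H (c * x) : ℝ) : ℂ)
    simpa [hoWave, hc, mul_comm, mul_assoc, mul_left_comm] using this
  -- spatial derivatives
  set K : ℂ := (2 * (n : ℂ) + 1) * Complex.I * (ω : ℂ) * (t : ℂ) with hK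
  set E : ℝ → ℂ := fun y => Complex.exp (-(1 / 2) * ((ω : ℂ) * (y : ℂ) ^ 2 + K)) with hE
  have hEderiv : ∀ y : ℝ, HasDerivAt E (E y * (-(ω : ℂ) * (y : ℂ))) y := by
    intro y
    have h0 : HasDerivAt (fun s : ℝ => ((s : ℝ) : ℂ)) 1 y := (hasDerivAt_id y).ofReal_comp
    have hsq : HasDerivAt (fun s : ℝ => ((s : ℝ) : ℂ) ^ 2) (2 * (y : ℂ)) y := by
      simpa [pow_two, two_mul] using h0.fun_mul h0
    have h1 : HasDerivAt (fun s : ℝ => (-(1 / 2) : ℂ) * ((ω : ℂ) * ((s : ℝ) : ℂ) ^ 2 + K))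
        (-(ω : ℂ) * (y : ℂ)) y := by
      have := ((hsq.const_mul (ω : ℂ)).add_const K).const_mul (-(1 / 2) : ℂ)
      convert this using 1
      rfl
      ring
    simpa [hE] using h1.cexp
  set F1 : ℝ → ℂ := fun y =>
    (((c * deriv H (c * y) - ω * y * H (c * y) : ℝ)) : ℂ) * E y with hF1
  have hHc : ∀ y : ℝ, HasDerivAt (fun z : ℝ => H (c * z)) (deriv H (c * y) * c) y := by
    intro y
    have hin : HasDerivAt (fun z : ℝ => c * z) c y := by
      simpa using (hasDerivAt_id y).const_mul c
    exact (hH1 (c * y)).hasDerivAt.comp y hin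
  have hD1 : ∀ y : ℝ, HasDerivAt (fun z : ℝ => hoWave ω n H z t) (F1 y) y := by
    intro y
    have h1 : HasDerivAt (fun z : ℝ => ((H (c * z) : ℝ) : ℂ)) ((deriv H (c * y) * c : ℝ) : ℂ) y :=
      (hHc y).ofReal_comp
    have := h1.fun_mul (hEderiv y)
    rw [show (fun z : ℝ => hoWave ω n H z t) = fun z : ℝ => ((H (c * z) : ℝ) : ℂ) * E z from
      funext fun z => by simp [hoWave, hE, hK, hc]]
    convert this using 1
    rfl
    simp [hF1]
    ring
  have hD2 : HasDerivAt F1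
      ((((c^2 * deriv (deriv H) (c * x) - ω * H (c * x) - ω * x * c * deriv H (c * x) : ℝ)) : ℂ) * E x
        + (((c * deriv H (c * x) - ω * x * H (c * x) : ℝ)) : ℂ) * (E x * (-(ω : ℂ) * (x : ℂ)))) x := by
    have hg : HasDerivAt (fun y : ℝ => c * deriv H (c * y) - ω * y * H (c * y))
        (c ^ 2 * deriv (deriv H) (c * x) - ω * H (c * x) - ω * x * c * deriv H (c * x)) x := by
      have hin : HasDerivAt (fun z : ℝ => c * z) c x := by
        simpa using (hasDerivAt_id x).const_mul c
      have h1 : HasDerivAt (fun y : ℝ => deriv H (c * y)) (deriv (deriv H) (c * x) * c) x :=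
        (hH2 (c * x)).hasDerivAt.comp x hin
      have h2 : HasDerivAt (fun y : ℝ => ω * y) ω x := by
        simpa using (hasDerivAt_id x).const_mul ω
      have := (h1.const_mul c).fun_sub (h2.fun_mul (hHc x))
      convert this using 1
      rfl
      rfl
      ring
    have := (hg.ofReal_comp.fun_mul (hEderiv x))
    convert this using 1
  have e1 : deriv (fun s => hoWave ω n H x s) t
      = hoWave ω n H x t * (-(1 / 2) * ((2 * (n : ℂ) + 1) * Complex.I * (ω : ℂ))) := hT.deriv
  have e2 : deriv (fun y => hoWave ω n H y t) = F1 := funext fun y => (hD1 y).deriv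
  rw [e1, e2, hD2.deriv]
  have hode := hODE (c * x)
  have hval : deriv (deriv H) (c * x) = 2 * (c * x) * deriv H (c * x) - 2 * n * H (c * x) := by
    linarith
  have hwave : hoWave ω n H x t = ((H (c * x) : ℝ) : ℂ) * E x := by
    simp [hoWave, hE, hK, hc]
  rw [hwave, hval]
  push_cast
  rw [show ((ω : ℂ)) = (c : ℂ) ^ 2 from hc2'.symm]
  ring_nf
  rw [Complex.I_sq]
  ring

end
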